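/- Let H be a Hilbert space and z ∈ B(H) a contraction such that (1−z*z)^{1/2} has dense range. Define T with domain (1−z*z)^{1/2}H by T((1−z*z)^{1/2}ξ) = zξ. If u is an isometry on H with (u*(1−z*z)u)^{1/2} = (1−z*z)^{1/2}u, and S is the operator with domain (1−(zu)*(zu))^{1/2}H defined by S((1−(zu)*(zu))^{1/2}ξ) = zuξ, then S ⊆ T, i.e. the graph of S is contained in the graph of T. -/
import Mathlib

set_option synthInstance.maxHeartbeats 1000000
set_option maxHeartbeats 1000000

/-- Let `z` be a contraction on a Hilbert space with `(1−z*z)^{1/2}` of dense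
range, and let `T` be the operator with domain `(1−z*z)^{1/2}H`, `T((1−z*z)^{1/2}ξ) = zξ`
(the operator with z-transform `z`).  If `u` is an isometry with
`(u*(1−z*z)u)^{1/2} = (1−z*z)^{1/2}u`, and `S` is defined analogously from `zu`, then `S ⊆ T`:
every graph element `((1−(zu)*(zu))^{1/2}ξ, zuξ)` of `S` is a graph element of `T`, i.e. of the
form `((1−z*z)^{1/2}η, zη)`. -/
theorem stmt_12 {H : Type*} [NormedAddCommGroup H] [InnerProductSpace ℂ H] [CompleteSpace H]
    (z u : H →L[ℂ] H) (hz : ‖z‖ ≤ 1)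
    (hdr : DenseRange ⇑(CFC.sqrt (1 - star z * z)))
    (hu : star u * u = 1)
    (hcomm : CFC.sqrt (star u * (1 - star z * z) * u) = CFC.sqrt (1 - star z * z) * u) :
    ∀ ξ : H, ∃ η : H,
      CFC.sqrt (1 - star (z * u) * (z * u)) ξ = CFC.sqrt (1 - star z * z) η ∧
      (z * u) ξ = z η := by
  intro ξ
  refine ⟨u ξ, ?_, by simp [mul_comm]⟩
  have key : 1 - star (z * u) * (z * u) = star u * (1 - star z * z) * u := by
    simp only [star_mul]
    rw [mul_sub, sub_mul, mul_one, hu]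
    noncomm_ring
  rw [key, hcomm]
  simp
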